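/- Let N ≥ 2, b > c > 0, and integers s₀, s₁ ≥ 0 with s₀ + s₁ = N. The average per-user expected one-period payoff under the fair plan equals (b-c)·(s₀ + s₁(s₁-1)/(N-1))/N, and the welfare loss relative to the social optimum satisfies (b-c) - (b-c)·(s₀ + s₁(s₁-1)/(N-1))/N = (b-c)·s₀·s₁ / (N·(N-1)). In particular the loss is zero if and only if s₀ = 0 or s₁ = 0. -/
import Mathlib

/-- Average per-user payoff under the fair plan and the welfare loss:
the average equals `(b-c)(s₀ + s₁(s₁-1)/(N-1))/N`, the loss relative to the
social optimum equals `(b-c)s₀s₁/(N(N-1))`, and it is zero iff `s₀ = 0` or `s₁ = 0`. -/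
theorem fair_plan_welfare_loss (N s₀ s₁ : ℕ) (b c : ℝ)
    (hN : 2 ≤ N) (hc : 0 < c) (hb : c < b) (hsum : s₀ + s₁ = N) :
    ((s₁ : ℝ) * (b - ((s₁ : ℝ) - 1) / ((N : ℝ) - 1) * c)
        + (s₀ : ℝ) * (((s₀ : ℝ) - 1) / ((N : ℝ) - 1) * b - c)) / (N : ℝ)
      = (b - c) * ((s₀ : ℝ) + (s₁ : ℝ) * ((s₁ : ℝ) - 1) / ((N : ℝ) - 1)) / (N : ℝ) ∧
    (b - c) - (b - c) * ((s₀ : ℝ) + (s₁ : ℝ) * ((s₁ : ℝ) - 1) / ((N : ℝ) - 1)) / (N : ℝ)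
      = (b - c) * (s₀ : ℝ) * (s₁ : ℝ) / ((N : ℝ) * ((N : ℝ) - 1)) ∧
    ((b - c) * (s₀ : ℝ) * (s₁ : ℝ) / ((N : ℝ) * ((N : ℝ) - 1)) = 0 ↔ s₀ = 0 ∨ s₁ = 0) := by
  have hNs : (s₀ : ℝ) + s₁ = N := by exact_mod_cast hsum
  have hN1 : (N : ℝ) - 1 ≠ 0 := by
    have : (2 : ℝ) ≤ N := by exact_mod_cast hN
    linarith
  have hN0 : (N : ℝ) ≠ 0 := by
    have : (2 : ℝ) ≤ N := by exact_mod_cast hN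
    linarith
  have hbc : b - c ≠ 0 := by linarith
  refine ⟨?_, ?_, ?_⟩
  · rw [← hNs] at hN0 hN1 ⊢; field_simp; ring
  · rw [← hNs] at hN0 hN1 ⊢; field_simp; ring
  · constructor
    · intro h
      have h2 : (s₀ : ℝ) * s₁ = 0 := by
        have hne : (N : ℝ) * ((N : ℝ) - 1) ≠ 0 := mul_ne_zero hN0 hN1
        have h3 := (div_eq_zero_iff.mp h).resolve_right hne
        rcases mul_eq_zero.mp h3 with h' | h'
        · rcases mul_eq_zero.mp h' with h'' | h''
          · exact absurd h'' hbc
          · simp [h'']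
        · simp [h']
      rcases mul_eq_zero.mp h2 with h | h
      · left; exact_mod_cast h
      · right; exact_mod_cast h
    · rintro (h | h) <;> simp [h]
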